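/- (Uniqueness theorem) Let X = {x ∈ ℝⁿ : x_i ≥ 0 for all i}, λ > 0, and J(x) = (1/2)‖Kx − y‖₂² + λ‖Dx‖_{2,1}. Let x₁ ∈ X minimize J over X and assume: (i) there exists z ∈ ℝ^m such that DᵀD̂x₁ = Kᵀz, where Dᵀ(p,q) = Dhᵀp + Dvᵀq; (ii) ker(K) ∩ S₁ = {0}, where S₁ = {v ∈ ℝⁿ : |Dv|_i = 0 for all i with |Dx₁|_i = 0}. Then x₁ is the unique minimizer of J over X: every x₂ ∈ X minimizing J over X satisfies x₂ = x₁. -/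
import Mathlib
set_option maxHeartbeats 1000000


open Matrix Finset

/-- Gradient magnitude: `|Dx|_i = sqrt((Dh x)_i² + (Dv x)_i²)`. -/
noncomputable def gMag {n : ℕ} (Dh Dv : Matrix (Fin n) (Fin n) ℝ)
    (x : Fin n → ℝ) (i : Fin n) : ℝ :=
  Real.sqrt ((Dh.mulVec x i) ^ 2 + (Dv.mulVec x i) ^ 2)

/-- Horizontal component of the normalized gradient `D̂x`. -/
noncomputable def nGradH {n : ℕ} (Dh Dv : Matrix (Fin n) (Fin n) ℝ)
    (x : Fin n → ℝ) (i : Fin n) : ℝ :=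
  if gMag Dh Dv x i = 0 then 1 / 2 else Dh.mulVec x i / gMag Dh Dv x i

/-- Vertical component of the normalized gradient `D̂x`. -/
noncomputable def nGradV {n : ℕ} (Dh Dv : Matrix (Fin n) (Fin n) ℝ)
    (x : Fin n → ℝ) (i : Fin n) : ℝ :=
  if gMag Dh Dv x i = 0 then 1 / 2 else Dv.mulVec x i / gMag Dh Dv x i

/-- `S₁ = {v ∈ ℝⁿ : |Dv|_i = 0 for all i with |Dx₁|_i = 0}`. -/
def S1 {n : ℕ} (Dh Dv : Matrix (Fin n) (Fin n) ℝ) (x₁ : Fin n → ℝ) :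
    Set (Fin n → ℝ) :=
  {v | ∀ i, gMag Dh Dv x₁ i = 0 → gMag Dh Dv v i = 0}

lemma gMag_def {n : ℕ} (Dh Dv : Matrix (Fin n) (Fin n) ℝ) (x : Fin n → ℝ) (i : Fin n) :
    gMag Dh Dv x i = Real.sqrt ((Dh.mulVec x i) ^ 2 + (Dv.mulVec x i) ^ 2) := rfl

lemma gMag_nonneg {n : ℕ} (Dh Dv : Matrix (Fin n) (Fin n) ℝ) (x : Fin n → ℝ) (i : Fin n) :
    0 ≤ gMag Dh Dv x i := Real.sqrt_nonneg _

lemma gMag_sq {n : ℕ} (Dh Dv : Matrix (Fin n) (Fin n) ℝ) (x : Fin n → ℝ) (i : Fin n) :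
    (gMag Dh Dv x i) ^ 2 = (Dh.mulVec x i) ^ 2 + (Dv.mulVec x i) ^ 2 :=
  Real.sq_sqrt (by positivity)

lemma sqrt2_zero {a b : ℝ} (h : Real.sqrt (a^2 + b^2) = 0) : a = 0 ∧ b = 0 := by
  have h2 : a^2 + b^2 ≤ 0 := by
    by_contra hc
    push_neg at hc
    have := Real.sqrt_pos.mpr hc
    linarith
  have ha : a^2 = 0 := le_antisymm (by nlinarith [sq_nonneg b]) (sq_nonneg a)
  have hb : b^2 = 0 := le_antisymm (by nlinarith [sq_nonneg a]) (sq_nonneg b)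
  exact ⟨pow_eq_zero_iff two_ne_zero |>.mp ha, pow_eq_zero_iff two_ne_zero |>.mp hb⟩

lemma cs2 (a b c d : ℝ) :
    a*c + b*d ≤ Real.sqrt (a^2+b^2) * Real.sqrt (c^2+d^2) := by
  rw [← Real.sqrt_mul (by positivity)]
  rcases le_or_gt (a*c + b*d) 0 with h | h
  · exact h.trans (Real.sqrt_nonneg _)
  · have hsq : (a*c + b*d)^2 ≤ (a^2+b^2) * (c^2+d^2) := by nlinarith [sq_nonneg (a*d - b*c)]
    have := Real.sqrt_le_sqrt hsq
    rwa [Real.sqrt_sq h.le] at this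

lemma tri2 (a b c d : ℝ) :
    Real.sqrt ((a+c)^2 + (b+d)^2) ≤ Real.sqrt (a^2+b^2) + Real.sqrt (c^2+d^2) := by
  have h1 := cs2 a b c d
  have hu := Real.sq_sqrt (show (0:ℝ) ≤ a^2+b^2 by positivity)
  have hv := Real.sq_sqrt (show (0:ℝ) ≤ c^2+d^2 by positivity)
  have h2 : (a+c)^2 + (b+d)^2 ≤ (Real.sqrt (a^2+b^2) + Real.sqrt (c^2+d^2))^2 := by nlinarith
  have := Real.sqrt_le_sqrt h2
  rwa [Real.sqrt_sq (by positivity)] at this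

lemma sqrt_half2 (a b : ℝ) :
    Real.sqrt ((a/2)^2 + (b/2)^2) = Real.sqrt (a^2+b^2) / 2 := by
  rw [show (a/2)^2 + (b/2)^2 = (a^2+b^2)/4 by ring, Real.sqrt_div (by positivity),
    show (4:ℝ) = 2^2 by norm_num, Real.sqrt_sq (by norm_num)]

/-- Uniqueness theorem: if `x₁` minimizes
`J(x) = (1/2)‖Kx − y‖₂² + λ‖Dx‖_{2,1}` over the nonnegative orthant `X`, `λ > 0`,
`DᵀD̂x₁ = Kᵀz` for some `z`, and `ker(K) ∩ S₁ = {0}`, then `x₁` is the unique minimizer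
of `J` over `X`. -/
theorem stmt6 (m n : ℕ) (K : Matrix (Fin m) (Fin n) ℝ) (y : Fin m → ℝ)
    (Dh Dv : Matrix (Fin n) (Fin n) ℝ)
    (lam : ℝ) (hlam : 0 < lam)
    (X : Set (Fin n → ℝ)) (hX : X = {x | ∀ i, 0 ≤ x i})
    (J : (Fin n → ℝ) → ℝ)
    (hJ : ∀ x, J x = (1 / 2) * ∑ i, (K.mulVec x i - y i) ^ 2
        + lam * ∑ i, gMag Dh Dv x i)
    (x₁ : Fin n → ℝ) (hx₁ : x₁ ∈ X) (hmin₁ : ∀ x ∈ X, J x₁ ≤ J x)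
    (hz : ∃ z : Fin m → ℝ,
      Dhᵀ.mulVec (nGradH Dh Dv x₁) + Dvᵀ.mulVec (nGradV Dh Dv x₁) = Kᵀ.mulVec z)
    (hker : ∀ v ∈ S1 Dh Dv x₁, K.mulVec v = 0 → v = 0) :
    ∀ x₂ ∈ X, (∀ x ∈ X, J x₂ ≤ J x) → x₂ = x₁ := by
  intro x₂ hx₂ hmin₂
  obtain ⟨z, hzz⟩ := hz
  have hJeq : J x₁ = J x₂ := le_antisymm (hmin₁ x₂ hx₂) (hmin₂ x₁ hx₁)
  set xm : Fin n → ℝ := fun j => (x₁ j + x₂ j) / 2 with hxm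
  have hxmX : xm ∈ X := by
    rw [hX]; intro i
    have h1 : 0 ≤ x₁ i := by rw [hX] at hx₁; exact hx₁ i
    have h2 : 0 ≤ x₂ i := by rw [hX] at hx₂; exact hx₂ i
    simp only [hxm]; positivity
  have hlin : ∀ {k : ℕ} (A : Matrix (Fin k) (Fin n) ℝ) (i : Fin k),
      A.mulVec xm i = (A.mulVec x₁ i + A.mulVec x₂ i) / 2 := by
    intro k A i
    simp only [Matrix.mulVec, dotProduct, hxm]
    rw [← Finset.sum_add_distrib, Finset.sum_div]
    exact Finset.sum_congr rfl fun j _ => by ring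
  -- termwise convexity
  have hQterm : ∀ i, (K.mulVec xm i - y i)^2
      ≤ ((K.mulVec x₁ i - y i)^2 + (K.mulVec x₂ i - y i)^2) / 2 := by
    intro i
    rw [hlin K i]
    nlinarith [sq_nonneg (K.mulVec x₁ i - K.mulVec x₂ i)]
  have hGterm : ∀ i, gMag Dh Dv xm i ≤ (gMag Dh Dv x₁ i + gMag Dh Dv x₂ i) / 2 := by
    intro i
    rw [gMag_def, gMag_def, gMag_def, hlin Dh i, hlin Dv i]
    have h := tri2 (Dh.mulVec x₁ i / 2) (Dv.mulVec x₁ i / 2)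
      (Dh.mulVec x₂ i / 2) (Dv.mulVec x₂ i / 2)
    rw [sqrt_half2, sqrt_half2] at h
    have e : ((Dh.mulVec x₁ i + Dh.mulVec x₂ i)/2)^2 + ((Dv.mulVec x₁ i + Dv.mulVec x₂ i)/2)^2
        = (Dh.mulVec x₁ i/2 + Dh.mulVec x₂ i/2)^2 + (Dv.mulVec x₁ i/2 + Dv.mulVec x₂ i/2)^2 := by
      ring
    rw [e]
    linarith
  -- sum convexity
  have hsumQ : ∑ i, (K.mulVec xm i - y i)^2
      ≤ (∑ i, (K.mulVec x₁ i - y i)^2 + ∑ i, (K.mulVec x₂ i - y i)^2) / 2 := by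
    calc ∑ i, (K.mulVec xm i - y i)^2
        ≤ ∑ i, ((K.mulVec x₁ i - y i)^2 + (K.mulVec x₂ i - y i)^2) / 2 :=
          Finset.sum_le_sum fun i _ => hQterm i
      _ = _ := by rw [← Finset.sum_div, Finset.sum_add_distrib]
  have hsumG : ∑ i, gMag Dh Dv xm i
      ≤ (∑ i, gMag Dh Dv x₁ i + ∑ i, gMag Dh Dv x₂ i) / 2 := by
    calc ∑ i, gMag Dh Dv xm i
        ≤ ∑ i, (gMag Dh Dv x₁ i + gMag Dh Dv x₂ i) / 2 :=
          Finset.sum_le_sum fun i _ => hGterm i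
      _ = _ := by rw [← Finset.sum_div, Finset.sum_add_distrib]
  have hm := hmin₁ xm hxmX
  rw [hJ x₁, hJ xm] at hm
  have hJeq' := hJeq
  rw [hJ x₁, hJ x₂] at hJeq'
  have hlamG := mul_le_mul_of_nonneg_left hsumG hlam.le
  -- equality in Q sum
  have hQeq : ∑ i, (K.mulVec xm i - y i)^2
      = (∑ i, (K.mulVec x₁ i - y i)^2 + ∑ i, (K.mulVec x₂ i - y i)^2) / 2 := by
    linarith
  have hQeq' : ∑ i, (K.mulVec xm i - y i)^2
      = ∑ i, ((K.mulVec x₁ i - y i)^2 + (K.mulVec x₂ i - y i)^2) / 2 := by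
    rw [hQeq, ← Finset.sum_div, Finset.sum_add_distrib]
  have hQall := (Finset.sum_eq_sum_iff_of_le (fun i _ => hQterm i)).mp hQeq'
  -- K x₂ = K x₁
  have KE : ∀ i, K.mulVec x₂ i = K.mulVec x₁ i := by
    intro i
    have h := hQall i (Finset.mem_univ i)
    rw [hlin K i] at h
    have h0 : (K.mulVec x₁ i - K.mulVec x₂ i)^2 = 0 := by linear_combination (-4 : ℝ) * h
    have := pow_eq_zero_iff two_ne_zero |>.mp h0
    linarith [sub_eq_zero.mp this]
  -- G x₂ = G x₁
  have hQ12 : ∑ i, (K.mulVec x₂ i - y i)^2 = ∑ i, (K.mulVec x₁ i - y i)^2 :=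
    Finset.sum_congr rfl fun i _ => by rw [KE i]
  have hGeq : ∑ i, gMag Dh Dv x₂ i = ∑ i, gMag Dh Dv x₁ i :=
    mul_left_cancel₀ (ne_of_gt hlam) (by linarith)
  -- dual certificate pairing
  have key1 : ∀ i, nGradH Dh Dv x₁ i * Dh.mulVec x₁ i + nGradV Dh Dv x₁ i * Dv.mulVec x₁ i
      = gMag Dh Dv x₁ i := by
    intro i
    by_cases hg : gMag Dh Dv x₁ i = 0
    · obtain ⟨h1, h2⟩ := sqrt2_zero (gMag_def Dh Dv x₁ i ▸ hg)
      simp [nGradH, nGradV, hg, h1, h2]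
    · simp only [nGradH, nGradV, if_neg hg]
      have hgpos : 0 < gMag Dh Dv x₁ i := lt_of_le_of_ne (gMag_nonneg Dh Dv x₁ i) (Ne.symm hg)
      field_simp
      linarith [gMag_sq Dh Dv x₁ i]
  have key2 : ∀ i, nGradH Dh Dv x₁ i * Dh.mulVec x₂ i + nGradV Dh Dv x₁ i * Dv.mulVec x₂ i
      ≤ gMag Dh Dv x₂ i := by
    intro i
    by_cases hg : gMag Dh Dv x₁ i = 0
    · simp only [nGradH, nGradV, if_pos hg]
      rcases le_or_gt (Dh.mulVec x₂ i + Dv.mulVec x₂ i) 0 with h | h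
      · linarith [gMag_nonneg Dh Dv x₂ i]
      · have h1 : ((Dh.mulVec x₂ i + Dv.mulVec x₂ i)/2)^2
            ≤ (Dh.mulVec x₂ i)^2 + (Dv.mulVec x₂ i)^2 := by
          nlinarith [sq_nonneg (Dh.mulVec x₂ i - Dv.mulVec x₂ i)]
        have h2 := Real.sqrt_le_sqrt h1
        rw [Real.sqrt_sq (by linarith)] at h2
        rw [gMag_def]
        linarith
    · simp only [nGradH, nGradV, if_neg hg]
      have hgpos : 0 < gMag Dh Dv x₁ i := lt_of_le_of_ne (gMag_nonneg Dh Dv x₁ i) (Ne.symm hg)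
      have hcs := cs2 (Dh.mulVec x₁ i) (Dv.mulVec x₁ i) (Dh.mulVec x₂ i) (Dv.mulVec x₂ i)
      rw [← gMag_def, ← gMag_def] at hcs
      have e : Dh.mulVec x₁ i / gMag Dh Dv x₁ i * Dh.mulVec x₂ i
          + Dv.mulVec x₁ i / gMag Dh Dv x₁ i * Dv.mulVec x₂ i
          = (Dh.mulVec x₁ i * Dh.mulVec x₂ i + Dv.mulVec x₁ i * Dv.mulVec x₂ i)
            / gMag Dh Dv x₁ i := by ring
      rw [e, div_le_iff₀ hgpos]
      nlinarith [hcs]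
  -- adjoint identity
  have hdot : ∀ (A : Matrix (Fin n) (Fin n) ℝ) (u x : Fin n → ℝ),
      ∑ i, u i * A.mulVec x i = Aᵀ.mulVec u ⬝ᵥ x := by
    intro A u x
    rw [Matrix.mulVec_transpose]
    exact Matrix.dotProduct_mulVec u A x
  have t : ∀ x : Fin n → ℝ,
      ∑ i, (nGradH Dh Dv x₁ i * Dh.mulVec x i + nGradV Dh Dv x₁ i * Dv.mulVec x i)
        = z ⬝ᵥ K.mulVec x := by
    intro x
    rw [Finset.sum_add_distrib, hdot Dh _ x, hdot Dv _ x, ← add_dotProduct, hzz,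
      Matrix.mulVec_transpose, ← Matrix.dotProduct_mulVec]
  have hsum2 : ∑ i, (nGradH Dh Dv x₁ i * Dh.mulVec x₂ i + nGradV Dh Dv x₁ i * Dv.mulVec x₂ i)
      = ∑ i, gMag Dh Dv x₂ i := by
    calc ∑ i, (nGradH Dh Dv x₁ i * Dh.mulVec x₂ i + nGradV Dh Dv x₁ i * Dv.mulVec x₂ i)
        = z ⬝ᵥ K.mulVec x₂ := t x₂
      _ = z ⬝ᵥ K.mulVec x₁ := by rw [show K.mulVec x₂ = K.mulVec x₁ from funext KE]
      _ = ∑ i, (nGradH Dh Dv x₁ i * Dh.mulVec x₁ i + nGradV Dh Dv x₁ i * Dv.mulVec x₁ i) :=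
          (t x₁).symm
      _ = ∑ i, gMag Dh Dv x₁ i := Finset.sum_congr rfl fun i _ => key1 i
      _ = ∑ i, gMag Dh Dv x₂ i := hGeq.symm
  have hall := (Finset.sum_eq_sum_iff_of_le (fun i _ => key2 i)).mp hsum2
  -- zero components of x₂ gradient
  have hzero : ∀ i, gMag Dh Dv x₁ i = 0 → Dh.mulVec x₂ i = 0 ∧ Dv.mulVec x₂ i = 0 := by
    intro i hi
    have h := hall i (Finset.mem_univ i)
    simp only [nGradH, nGradV, if_pos hi] at h
    have hsq : (1/2 * Dh.mulVec x₂ i + 1/2 * Dv.mulVec x₂ i)^2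
        = (Dh.mulVec x₂ i)^2 + (Dv.mulVec x₂ i)^2 := by
      rw [h]; exact gMag_sq Dh Dv x₂ i
    have hcd : (Dh.mulVec x₂ i)^2 + (Dv.mulVec x₂ i)^2 ≤ 0 := by
      nlinarith [sq_nonneg (Dh.mulVec x₂ i - Dv.mulVec x₂ i)]
    have hc : (Dh.mulVec x₂ i)^2 = 0 :=
      le_antisymm (by nlinarith [sq_nonneg (Dv.mulVec x₂ i)]) (sq_nonneg _)
    have hd : (Dv.mulVec x₂ i)^2 = 0 :=
      le_antisymm (by nlinarith [sq_nonneg (Dh.mulVec x₂ i)]) (sq_nonneg _)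
    exact ⟨pow_eq_zero_iff two_ne_zero |>.mp hc, pow_eq_zero_iff two_ne_zero |>.mp hd⟩
  -- v := x₂ - x₁ ∈ ker K ∩ S₁
  set v : Fin n → ℝ := fun j => x₂ j - x₁ j with hv
  have hlinv : ∀ {k : ℕ} (A : Matrix (Fin k) (Fin n) ℝ) (i : Fin k),
      A.mulVec v i = A.mulVec x₂ i - A.mulVec x₁ i := by
    intro k A i
    simp only [Matrix.mulVec, dotProduct, hv]
    rw [← Finset.sum_sub_distrib]
    exact Finset.sum_congr rfl fun j _ => by ring
  have hvS : v ∈ S1 Dh Dv x₁ := by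
    intro i hi
    obtain ⟨h1h, h1v⟩ := sqrt2_zero (gMag_def Dh Dv x₁ i ▸ hi)
    obtain ⟨h2h, h2v⟩ := hzero i hi
    rw [gMag_def, hlinv Dh i, hlinv Dv i, h1h, h1v, h2h, h2v]
    simp
  have hKv : K.mulVec v = 0 := by
    funext i
    rw [hlinv K i, KE i]
    simp
  have hv0 := hker v hvS hKv
  funext j
  have := congrFun hv0 j
  simp only [hv, Pi.zero_apply] at this
  linarith [sub_eq_zero.mp this]
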